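/- Thermofield-double preparation identity: With notation as in the two-copy scheme, (1 ⊗ 𝒰*) e^{-βW/2} (𝒰 ⊗ 1) |Ψ₀⟩ = e^{-β ΔA/2} |Ψ₁⟩, where |Ψ₁⟩ = (1/√Z₁) ∑ₙ e^{-β ε₁ₙ/2} |φ₁ₙ⟩ ⊗ |φ₁ₙ*⟩. -/

import Mathlib

open scoped BigOperators

/-- The elementary tensor `u ⊗ v`, realized on the doubled Euclidean space. -/
noncomputable def tensorVec {N : ℕ} (u v : EuclideanSpace ℂ (Fin N)) :
    EuclideanSpace ℂ (Fin N × Fin N) :=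
  (WithLp.equiv 2 _).symm fun p => u p.1 * v p.2

/-- Entrywise complex conjugation of a vector (in the computational basis). -/
noncomputable def starVec {N : ℕ} (u : EuclideanSpace ℂ (Fin N)) :
    EuclideanSpace ℂ (Fin N) :=
  (WithLp.equiv 2 _).symm fun i => star (u i)

section Helpers

variable {N : ℕ}

lemma tensorVec_apply (u v : EuclideanSpace ℂ (Fin N)) (p : Fin N × Fin N) :
    tensorVec u v p = u p.1 * v p.2 := rfl

lemma starVec_apply (u : EuclideanSpace ℂ (Fin N)) (i : Fin N) :
    starVec u i = star (u i) := rfl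

lemma euclid_sum_apply {ι α : Type*} [Fintype α] (s : Finset ι)
    (f : ι → EuclideanSpace ℂ α) (j : α) :
    (∑ i ∈ s, f i) j = ∑ i ∈ s, f i j :=
  by rw [WithLp.ofLp_sum, Finset.sum_apply]

lemma starVec_starVec (u : EuclideanSpace ℂ (Fin N)) : starVec (starVec u) = u := by
  ext i; simp [starVec_apply]

lemma starVec_smul (a : ℂ) (u : EuclideanSpace ℂ (Fin N)) :
    starVec (a • u) = (star a) • starVec u := by
  ext i; simp [starVec_apply, mul_comm]

lemma starVec_sum {ι : Type*} (s : Finset ι) (f : ι → EuclideanSpace ℂ (Fin N)) :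
    starVec (∑ i ∈ s, f i) = ∑ i ∈ s, starVec (f i) := by
  ext j; simp [starVec_apply, euclid_sum_apply]

lemma tensorVec_smul_left (a : ℂ) (u v : EuclideanSpace ℂ (Fin N)) :
    tensorVec (a • u) v = a • tensorVec u v := by
  ext p; simp [tensorVec_apply, mul_assoc]

lemma tensorVec_smul_right (a : ℂ) (u v : EuclideanSpace ℂ (Fin N)) :
    tensorVec u (a • v) = a • tensorVec u v := by
  ext p; simp [tensorVec_apply]; ring

lemma tensorVec_sum_left {ι : Type*} (s : Finset ι) (f : ι → EuclideanSpace ℂ (Fin N))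
    (v : EuclideanSpace ℂ (Fin N)) :
    tensorVec (∑ i ∈ s, f i) v = ∑ i ∈ s, tensorVec (f i) v := by
  ext p; simp [tensorVec_apply, euclid_sum_apply, Finset.sum_mul]

lemma tensorVec_sum_right {ι : Type*} (s : Finset ι) (u : EuclideanSpace ℂ (Fin N))
    (f : ι → EuclideanSpace ℂ (Fin N)) :
    tensorVec u (∑ i ∈ s, f i) = ∑ i ∈ s, tensorVec u (f i) := by
  ext p; simp [tensorVec_apply, euclid_sum_apply, Finset.mul_sum]

lemma exp_eigen {E : Type*} [NormedAddCommGroup E] [NormedSpace ℂ E] [CompleteSpace E]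
    (A : E →L[ℂ] E) (v : E) (μ : ℂ) (h : A v = μ • v) :
    NormedSpace.exp A v = Complex.exp μ • v := by
  have hpow : ∀ n : ℕ, (A ^ n) v = μ ^ n • v := by
    intro n
    induction n with
    | zero => simp
    | succ k ih =>
      rw [pow_succ, ContinuousLinearMap.mul_apply, h, map_smul, ih, smul_smul, pow_succ]
      ring_nf
  have hsum : Summable fun n : ℕ => ((Nat.factorial n : ℂ))⁻¹ • A ^ n :=
    NormedSpace.expSeries_summable' (𝕂 := ℂ) A
  have heval := ContinuousLinearMap.map_tsum (ContinuousLinearMap.apply ℂ E v) hsum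
  rw [NormedSpace.exp_eq_tsum (𝕂 := ℂ)]
  show (ContinuousLinearMap.apply ℂ E v) (∑' n : ℕ, ((Nat.factorial n : ℂ))⁻¹ • A ^ n)
      = Complex.exp μ • v
  rw [heval]
  have : ∀ n : ℕ, (ContinuousLinearMap.apply ℂ E v) (((Nat.factorial n : ℂ))⁻¹ • A ^ n)
      = (((Nat.factorial n : ℂ))⁻¹ * μ ^ n) • v := by
    intro n
    simp only [ContinuousLinearMap.apply_apply, ContinuousLinearMap.smul_apply, hpow, smul_smul]
  rw [tsum_congr this, Summable.tsum_smul_const]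
  · congr 1
    rw [Complex.exp_eq_exp_ℂ, NormedSpace.exp_eq_tsum (𝕂 := ℂ)]
    exact tsum_congr fun n => (smul_eq_mul (α := ℂ) _ _).symm
  · exact NormedSpace.expSeries_summable' (𝕂 := ℂ) μ

end Helpers

/-- **Thermofield-double preparation identity.**
`(1 ⊗ 𝒰*) e^{-βW/2} (𝒰 ⊗ 1) |Ψ₀⟩ = e^{-β ΔA/2} |Ψ₁⟩ = √(Z₁/Z₀) |Ψ₁⟩`, where
`|Ψᵢ⟩` are the thermofield double states of `Hᵢ`, `W = H₁ ⊗ 1 − 1 ⊗ H₀*`, and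
`𝒰*` is the entrywise complex conjugate of the unitary `𝒰`
(so `𝒰* v = star (𝒰 (star v))` entrywise). -/
theorem thermofield_double_preparation {N : ℕ} (hN : 0 < N)
    (H₀ H₁ : EuclideanSpace ℂ (Fin N) →L[ℂ] EuclideanSpace ℂ (Fin N))
    (hH₀ : IsSelfAdjoint H₀) (hH₁ : IsSelfAdjoint H₁)
    (φ₀ φ₁ : OrthonormalBasis (Fin N) ℂ (EuclideanSpace ℂ (Fin N)))
    (e0 e1 : Fin N → ℝ)
    (h0 : ∀ m, H₀ (φ₀ m) = (e0 m : ℂ) • φ₀ m)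
    (h1 : ∀ n, H₁ (φ₁ n) = (e1 n : ℂ) • φ₁ n)
    (𝒰 : EuclideanSpace ℂ (Fin N) ≃ₗᵢ[ℂ] EuclideanSpace ℂ (Fin N))
    (β : ℝ) (hβ : 0 ≤ β)
    (Z₀ Z₁ : ℝ)
    (hZ₀ : Z₀ = ∑ m, Real.exp (-β * e0 m))
    (hZ₁ : Z₁ = ∑ n, Real.exp (-β * e1 n))
    (W UI IUstar :
      EuclideanSpace ℂ (Fin N × Fin N) →L[ℂ] EuclideanSpace ℂ (Fin N × Fin N))
    (hW : ∀ m n, W (tensorVec (φ₁ n) (starVec (φ₀ m)))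
        = ((e1 n - e0 m : ℝ) : ℂ) • tensorVec (φ₁ n) (starVec (φ₀ m)))
    (hUI : ∀ u v, UI (tensorVec u v) = tensorVec (𝒰 u) v)
    (hIUstar : ∀ u v, IUstar (tensorVec u v) = tensorVec u (starVec (𝒰 (starVec v))))
    (Ψ₀ Ψ₁ : EuclideanSpace ℂ (Fin N × Fin N))
    (hΨ₀ : Ψ₀ = ((Real.sqrt Z₀ : ℝ) : ℂ)⁻¹ •
        ∑ m, ((Real.exp (-β * e0 m / 2) : ℝ) : ℂ) • tensorVec (φ₀ m) (starVec (φ₀ m)))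
    (hΨ₁ : Ψ₁ = ((Real.sqrt Z₁ : ℝ) : ℂ)⁻¹ •
        ∑ n, ((Real.exp (-β * e1 n / 2) : ℝ) : ℂ) • tensorVec (φ₁ n) (starVec (φ₁ n))) :
    IUstar ((NormedSpace.exp (((-(β / 2) : ℝ) : ℂ) • W)) (UI Ψ₀))
      = ((Real.sqrt (Z₁ / Z₀) : ℝ) : ℂ) • Ψ₁ := by
  classical
  have hNe : Nonempty (Fin N) := Fin.pos_iff_nonempty.mp hN
  have hZ₀pos : 0 < Z₀ := by
    rw [hZ₀]
    exact Finset.sum_pos (fun m _ => Real.exp_pos _) Finset.univ_nonempty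
  have hZ₁pos : 0 < Z₁ := by
    rw [hZ₁]
    exact Finset.sum_pos (fun n _ => Real.exp_pos _) Finset.univ_nonempty
  set γ : ℂ := ((-(β / 2) : ℝ) : ℂ) with hγ
  set ψ : OrthonormalBasis (Fin N) ℂ (EuclideanSpace ℂ (Fin N)) := φ₀.map 𝒰 with hψdef
  have hψap : ∀ m, ψ m = 𝒰 (φ₀ m) := fun m => rfl
  set c : Fin N → Fin N → ℂ := fun n m => @inner ℂ _ _ (φ₁ n) (ψ m) with hcdef
  have hrep : ∀ m, 𝒰 (φ₀ m) = ∑ n, c n m • φ₁ n := by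
    intro m
    rw [← hψap]
    exact (φ₁.sum_repr' (ψ m)).symm
  have hortho : ∀ n n', (∑ m, c n m * star (c n' m)) = if n = n' then 1 else 0 := by
    intro n n'
    have h1 : ∀ m, star (c n' m) = @inner ℂ _ _ (ψ m) (φ₁ n') := fun m =>
      inner_conj_symm (ψ m) (φ₁ n')
    calc (∑ m, c n m * star (c n' m))
        = ∑ m, @inner ℂ _ _ (φ₁ n) (ψ m) * @inner ℂ _ _ (ψ m) (φ₁ n') :=
          Finset.sum_congr rfl fun m _ => by rw [h1]
      _ = @inner ℂ _ _ (φ₁ n) (φ₁ n') := ψ.sum_inner_mul_inner _ _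
      _ = if n = n' then 1 else 0 := orthonormal_iff_ite.mp φ₁.orthonormal n n'
  set T : Fin N → Fin N → EuclideanSpace ℂ (Fin N × Fin N) :=
    fun m n => tensorVec (φ₁ n) (starVec (φ₀ m)) with hTdef
  set U : Fin N → Fin N → EuclideanSpace ℂ (Fin N × Fin N) :=
    fun n n' => tensorVec (φ₁ n) (starVec (φ₁ n')) with hUdef
  set a : Fin N → ℂ := fun m => ((Real.exp (-β * e0 m / 2) : ℝ) : ℂ) with hadef
  set b : Fin N → ℂ := fun n => ((Real.exp (-β * e1 n / 2) : ℝ) : ℂ) with hbdef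
  have hscal : ∀ m n, Complex.exp (γ * ((e1 n - e0 m : ℝ) : ℂ)) * a m = b n := by
    intro m n
    have harith : (-(β / 2)) * (e1 n - e0 m) + (-β * e0 m / 2) = -β * e1 n / 2 := by ring
    rw [hγ, hadef, hbdef]
    rw [← Complex.ofReal_mul, ← Complex.ofReal_exp, ← Complex.ofReal_mul, ← Real.exp_add, harith]
  have hexp : ∀ m n, NormedSpace.exp (γ • W) (T m n)
      = Complex.exp (γ * ((e1 n - e0 m : ℝ) : ℂ)) • T m n := by
    intro m n
    refine exp_eigen _ _ _ ?_
    rw [ContinuousLinearMap.smul_apply, hTdef]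
    simp only []
    rw [hW, smul_smul]
  have step1 : UI Ψ₀ = ((Real.sqrt Z₀ : ℝ) : ℂ)⁻¹ • ∑ m, ∑ n, (a m * c n m) • T m n := by
    rw [hΨ₀, map_smul, map_sum]
    congr 1
    refine Finset.sum_congr rfl fun m _ => ?_
    rw [map_smul, hUI, hrep m, tensorVec_sum_left, Finset.smul_sum]
    exact Finset.sum_congr rfl fun n _ => by rw [tensorVec_smul_left, smul_smul]
  have step2 : NormedSpace.exp (γ • W) (UI Ψ₀)
      = ((Real.sqrt Z₀ : ℝ) : ℂ)⁻¹ • ∑ m, ∑ n, ((b n * c n m) • T m n) := by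
    rw [step1, map_smul, map_sum]
    congr 1
    refine Finset.sum_congr rfl fun m _ => ?_
    rw [map_sum]
    refine Finset.sum_congr rfl fun n _ => ?_
    rw [map_smul, hexp m n, smul_smul]
    congr 1
    rw [← hscal m n]
    ring
  have hIU2 : ∀ m n, IUstar (T m n) = ∑ n', star (c n' m) • U n n' := by
    intro m n
    rw [hTdef]
    simp only []
    rw [hIUstar, starVec_starVec, hrep m, starVec_sum, tensorVec_sum_right]
    refine Finset.sum_congr rfl fun n' _ => ?_
    rw [starVec_smul, tensorVec_smul_right]
  have step3 : IUstar (NormedSpace.exp (γ • W) (UI Ψ₀))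
      = ((Real.sqrt Z₀ : ℝ) : ℂ)⁻¹ • ∑ m, ∑ n, ∑ n',
          ((b n * c n m) * star (c n' m)) • U n n' := by
    rw [step2, map_smul, map_sum]
    congr 1
    refine Finset.sum_congr rfl fun m _ => ?_
    rw [map_sum]
    refine Finset.sum_congr rfl fun n _ => ?_
    rw [map_smul, hIU2 m n, Finset.smul_sum]
    exact Finset.sum_congr rfl fun n' _ => by rw [smul_smul]
  have step4 : (∑ m, ∑ n, ∑ n', ((b n * c n m) * star (c n' m)) • U n n')
      = ∑ n, b n • U n n := by
    rw [Finset.sum_comm]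
    refine Finset.sum_congr rfl fun n _ => ?_
    rw [Finset.sum_comm]
    have hinner : ∀ n', (∑ m, ((b n * c n m) * star (c n' m)) • U n n')
        = (if n = n' then b n else 0) • U n n' := by
      intro n'
      rw [← Finset.sum_smul]
      congr 1
      calc (∑ m, (b n * c n m) * star (c n' m))
          = b n * ∑ m, c n m * star (c n' m) := by
            rw [Finset.mul_sum]; exact Finset.sum_congr rfl fun m _ => by ring
        _ = b n * (if n = n' then 1 else 0) := by rw [hortho]
        _ = (if n = n' then b n else 0) := by split <;> simp
    rw [Finset.sum_congr rfl fun n' _ => hinner n']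
    simp [ite_smul]
  have hs : (((Real.sqrt Z₀ : ℝ) : ℂ))⁻¹
      = ((Real.sqrt (Z₁ / Z₀) : ℝ) : ℂ) * (((Real.sqrt Z₁ : ℝ) : ℂ))⁻¹ := by
    have h0' : Real.sqrt Z₀ ≠ 0 := ne_of_gt (Real.sqrt_pos.mpr hZ₀pos)
    have h1' : Real.sqrt Z₁ ≠ 0 := ne_of_gt (Real.sqrt_pos.mpr hZ₁pos)
    have hre : (Real.sqrt Z₀)⁻¹ = Real.sqrt (Z₁ / Z₀) * (Real.sqrt Z₁)⁻¹ := by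
      rw [Real.sqrt_div hZ₁pos.le]
      field_simp
    rw [← Complex.ofReal_inv, ← Complex.ofReal_inv, ← Complex.ofReal_mul, hre]
  rw [step3, step4, hΨ₁, smul_smul, ← hs]
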